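/- Let g: X → Y be a simplicial map between reduced simplicial sets, Γ the Kan loop group functor, τ_X and τ_Y the universal twisting functions, and ι_g: X ×_{τ_Y g} ΓY → X the projection. Then the map (X ×_{τ_Y g} ΓY) ×_{τ_X ι_g} ΓX → (X ×_{τ_X} ΓX) × ΓY sending (x, v, w) to (x, w, Γ(g)(w)^{-1} · v) is an isomorphism of simplicial sets. -/

import Mathlib

/-!
Simplicial scaffolding: weak homotopy equivalences of simplicial sets, twisting functions,
twisted cartesian products, and the Kan loop group / classifying space adjunction
(characterized by the universal properties of the universal and couniversal twisting
functions), following Appendices A and B and Section 1.3.1 of Farjoun–Hess,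
"Normal and conormal maps in homotopy theory".
-/

open CategoryTheory Simplicial Opposite Topology Topology.Homotopy

/-- image of a generalized loop under a continuous map -/
def GenLoop.push {N : Type} {X Y : Type} [TopologicalSpace X] [TopologicalSpace Y]
    (f : C(X, Y)) {x : X} (p : GenLoop N X x) : GenLoop N Y (f x) :=
  ⟨f.comp p.1, fun y hy => by
    simp only [ContinuousMap.comp_apply, p.2 y hy]⟩

/-- the induced map on homotopy groups -/
def homotopyGroupMap (N : Type) {X Y : Type} [TopologicalSpace X] [TopologicalSpace Y]
    (f : C(X, Y)) (x : X) : HomotopyGroup N X x → HomotopyGroup N Y (f x) :=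
  Quotient.map (GenLoop.push f)
    (fun _ _ h => Nonempty.map (fun H => H.compContinuousMap f) h)

/-- the induced map on path components -/
def zerothHomotopyMap {X Y : Type} [TopologicalSpace X] [TopologicalSpace Y]
    (f : C(X, Y)) : ZerothHomotopy X → ZerothHomotopy Y :=
  Quotient.map f (fun _ _ h => ⟨h.somePath.map f.continuous⟩)

/-- A continuous map is a weak homotopy equivalence if it induces a bijection on path
components and isomorphisms on all homotopy groups at all basepoints. -/
def IsWeakHomotopyEquiv {X Y : Type} [TopologicalSpace X] [TopologicalSpace Y]
    (f : C(X, Y)) : Prop :=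
  Function.Bijective (zerothHomotopyMap f) ∧
  ∀ (n : ℕ) (x : X), Function.Bijective (homotopyGroupMap (Fin (n + 1)) f x)

/-- The usual weak equivalences of simplicial sets: maps whose geometric realization is a
weak homotopy equivalence. -/
noncomputable def sWeq : MorphismProperty SSet.{0} :=
  fun _ _ f => IsWeakHomotopyEquiv (SSet.toTop.map f).hom

/-- A simplicial set is contractible if its geometric realization is contractible. -/
def SContractible (X : SSet.{0}) : Prop :=
  ContractibleSpace (SSet.toTop.obj X)

/-- simplicial groups -/
abbrev SGrp := SimplicialObject GrpCat.{0}

/-- the underlying simplicial set of a simplicial group -/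
noncomputable def sU : SGrp ⥤ SSet.{0} :=
  ((SimplicialObject.whiskering _ _).obj (forget GrpCat))

/-- A twisting function `τ : X → G` from a simplicial set to a simplicial group: a degree `-1`
map of graded sets satisfying `d₀ τ(x) = (τ (d₀ x))⁻¹ ⬝ τ (d₁ x)`, `dᵢ τ(x) = τ (dᵢ₊₁ x)` for
`i > 0`, `sᵢ τ(x) = τ (sᵢ₊₁ x)` and `τ (s₀ x) = e`. -/
structure TwFn (X : SSet.{0}) (G : SGrp) where
  t : ∀ n : ℕ, X _⦋n + 1⦌ → G.obj (op ⦋n⦌)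
  d₀ : ∀ (n : ℕ) (x : X _⦋n + 2⦌),
    (G.δ 0) (t (n + 1) x) = (t n (X.δ 0 x))⁻¹ * t n (X.δ 1 x)
  dsucc : ∀ (n : ℕ) (i : Fin (n + 1)) (x : X _⦋n + 2⦌),
    (G.δ i.succ) (t (n + 1) x) = t n (X.δ i.succ.succ x)
  s : ∀ (n : ℕ) (i : Fin (n + 1)) (x : X _⦋n + 1⦌),
    (G.σ i) (t n x) = t (n + 1) (X.σ i.succ x)
  s₀ : ∀ (n : ℕ) (x : X _⦋n⦌), t n (X.σ 0 x) = 1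

/-- The twisted cartesian product `X ×_τ G` of `X` and `G` (with `G` acting on itself by left
multiplication), presented as a simplicial set `P` with levelwise bijections
`P_n ≃ X_n × G_n` under which `d₀ (x, y) = (d₀ x, τ(x) ⬝ d₀ y)`, the remaining faces and the
degeneracies being componentwise, together with the projection onto `X`. -/
structure TCP (X : SSet.{0}) (G : SGrp) (τ : TwFn X G) where
  P : SSet.{0}
  e : ∀ n : ℕ, P _⦋n⦌ ≃ X _⦋n⦌ × G.obj (op ⦋n⦌)
  d₀ : ∀ (n : ℕ) (p : P _⦋n + 1⦌),
    e n (P.δ 0 p) =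
      (X.δ 0 (e (n + 1) p).1, τ.t n (e (n + 1) p).1 * (G.δ 0) (e (n + 1) p).2)
  dsucc : ∀ (n : ℕ) (i : Fin (n + 1)) (p : P _⦋n + 1⦌),
    e n (P.δ i.succ p) = (X.δ i.succ (e (n + 1) p).1, (G.δ i.succ) (e (n + 1) p).2)
  s : ∀ (n : ℕ) (i : Fin (n + 1)) (p : P _⦋n⦌),
    e (n + 1) (P.σ i p) = (X.σ i (e n p).1, (G.σ i) (e n p).2)
  proj : P ⟶ X
  proj_eq : ∀ (n : ℕ) (p : P _⦋n⦌), proj.app (op ⦋n⦌) p = (e n p).1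

/-- reduced: exactly one `0`-simplex -/
def SSet.IsReduced (X : SSet.{0}) : Prop :=
  Nonempty (X _⦋0⦌) ∧ Subsingleton (X _⦋0⦌)

/-- 1-reduced: exactly one `0`-simplex and exactly one `1`-simplex -/
def SSet.IsOneReduced (X : SSet.{0}) : Prop :=
  Nonempty (X _⦋0⦌) ∧ Subsingleton (X _⦋0⦌) ∧ Subsingleton (X _⦋1⦌)

/-- of finite type: finitely many simplices in each dimension -/
def SSet.FinType (X : SSet.{0}) : Prop := ∀ n : ℕ, Finite (X _⦋n⦌)

/-- the `n`-fold degeneracy of a `0`-simplex -/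
def SSet.ptOf (X : SSet.{0}) (x : X _⦋0⦌) (n : ℕ) : X _⦋n⦌ :=
  X.map (Quiver.Hom.op
    (show SimplexCategory.mk n ⟶ SimplexCategory.mk 0 from
      SimplexCategory.Hom.mk ⟨fun _ => 0, fun _ _ _ => le_refl _⟩)) x

/-- A pointed twisted cartesian product: a twisted cartesian product together with the
inclusion of the fibre `G` over (the degeneracies of) a `0`-simplex `x₀` of the base. -/
structure PtdTCP (X : SSet.{0}) (x₀ : X _⦋0⦌) (G : SGrp) (τ : TwFn X G)
    extends TCP X G τ where
  incl : sU.obj G ⟶ P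
  incl_eq : ∀ (n : ℕ) (w : G.obj (op ⦋n⦌)),
    e n (incl.app (op ⦋n⦌) w) = (X.ptOf x₀ n, w)

/-- The Kan loop group / classifying space adjunction, with the universal twisting functions
`τ_X : X → ΓX` and the couniversal twisting functions `ν_G : W̄G → G`, characterized by their
universal properties. -/
structure KanData where
  /-- the Kan loop group functor -/
  Γ : SSet.{0} ⥤ SGrp
  /-- the Kan classifying space functor -/
  Wbar : SGrp ⥤ SSet.{0}
  Wbar_reduced : ∀ G : SGrp, (Wbar.obj G).IsReduced
  /-- the adjunction `Γ ⊣ W̄` -/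
  adj : Γ ⊣ Wbar
  /-- the universal twisting function `τ_X : X → ΓX` -/
  τ : ∀ X : SSet.{0}, TwFn X (Γ.obj X)
  /-- universality of `τ_X`: it mediates a bijection between twisting functions with source
  `X` and simplicial group morphisms with source `ΓX` -/
  τ_universal : ∀ (X : SSet.{0}) (G : SGrp) (t : TwFn X G),
    ∃! φ : Γ.obj X ⟶ G, ∀ (n : ℕ) (x : X _⦋n + 1⦌),
      φ.app (op ⦋n⦌) ((τ X).t n x) = t.t n x
  τ_natural : ∀ {X Y : SSet.{0}} (f : X ⟶ Y) (n : ℕ) (x : X _⦋n + 1⦌),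
    (Γ.map f).app (op ⦋n⦌) ((τ X).t n x) = (τ Y).t n (f.app (op ⦋n + 1⦌) x)
  /-- the couniversal twisting function `ν_G : W̄G → G` -/
  ν : ∀ G : SGrp, TwFn (Wbar.obj G) G
  /-- couniversality of `ν_G`: it mediates a bijection between twisting functions with target
  `G` and simplicial maps with target `W̄G` -/
  ν_couniversal : ∀ (G : SGrp) (X : SSet.{0}) (t : TwFn X G),
    ∃! φ : X ⟶ Wbar.obj G, ∀ (n : ℕ) (x : X _⦋n + 1⦌),
      t.t n x = (ν G).t n (φ.app (op ⦋n + 1⦌) x)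
  /-- the unit of the adjunction classifies `τ_X` -/
  unit_char : ∀ (X : SSet.{0}) (n : ℕ) (x : X _⦋n + 1⦌),
    (ν (Γ.obj X)).t n ((adj.unit.app X).app (op ⦋n + 1⦌) x) = (τ X).t n x
  /-- the counit of the adjunction is induced by `ν_G` -/
  counit_char : ∀ (G : SGrp) (n : ℕ) (x : (Wbar.obj G) _⦋n + 1⦌),
    (adj.counit.app G).app (op ⦋n⦌) ((τ (Wbar.obj G)).t n x) = (ν G).t n x

/-- the unique `0`-simplex of `W̄G` -/
noncomputable def KanData.wpt (K : KanData) (G : SGrp) : (K.Wbar.obj G) _⦋0⦌ :=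
  (K.Wbar_reduced G).1.some

/-- An extended bundle of simplicial objects: a simplicial group `A`, simplicial sets
`Mo`, `N`, `C`, with maps `A → Mo → N → C` (the first a map of right `A`-sets, the last a
map over the comonoid `C`). -/
structure SExtBundle where
  A : SGrp
  Mo : SSet.{0}
  N : SSet.{0}
  C : SSet.{0}
  j : sU.obj A ⟶ Mo
  d : Mo ⟶ N
  p : N ⟶ C

/-- elementary (componentwise) weak equivalence of extended bundles -/
def SElemEquiv (E F : SExtBundle) : Prop :=
  ∃ (α : E.A ⟶ F.A) (μ : E.Mo ⟶ F.Mo) (ν' : E.N ⟶ F.N) (β : E.C ⟶ F.C),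
    sWeq (sU.map α) ∧ sWeq μ ∧ sWeq ν' ∧ sWeq β ∧
    E.j ≫ μ = sU.map α ≫ F.j ∧
    E.d ≫ ν' = μ ≫ F.d ∧
    E.p ≫ β = ν' ≫ F.p

/-- equivalence of extended bundles: a zigzag of elementary equivalences -/
def SBundleEquiv : SExtBundle → SExtBundle → Prop :=
  Relation.EqvGen SElemEquiv

namespace KanData

variable (K : KanData)

/-- The truncated Nomura–Puppe sequence `τ(f) = (G' → G' ⫽ G → W̄G → W̄G')` of a morphism
`f : G ⟶ G'` of simplicial groups, where `G' ⫽ G = W̄G ×_{f ν_G} G'` is (a model of) the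
Borel quotient. -/
noncomputable def sTau {G G' : SGrp} (f : G ⟶ G') {tq : TwFn (K.Wbar.obj G) G'}
    (Q : PtdTCP (K.Wbar.obj G) (K.wpt G) G' tq) : SExtBundle where
  A := G'
  Mo := Q.P
  N := K.Wbar.obj G
  C := K.Wbar.obj G'
  j := Q.incl
  d := Q.proj
  p := K.Wbar.map f

/-- The truncated dual Nomura–Puppe sequence `θ(g) = (ΓX' → ΓX → X ∖̃ X' → X')` of a
simplicial map `g : X' ⟶ X`, where `X ∖̃ X' = X' ×_{τ_X g} ΓX` is (a model of) the Borel
kernel, i.e. the homotopy fiber. -/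
noncomputable def sTheta {X' X : SSet.{0}} (x₀ : X' _⦋0⦌) (g : X' ⟶ X) {tk : TwFn X' (K.Γ.obj X)}
    (F : PtdTCP X' x₀ (K.Γ.obj X) tk) : SExtBundle where
  A := K.Γ.obj X'
  Mo := sU.obj (K.Γ.obj X)
  N := F.P
  C := X'
  j := sU.map (K.Γ.map g)
  d := F.incl
  p := F.proj

/-- The pair `(f, g)` is normal: the truncated Nomura–Puppe sequence of the simplicial group
morphism `f` is equivalent, as an extended bundle, to the truncated dual Nomura–Puppe
sequence of the simplicial map `g`.  Then `f` is h-normal with normality structure `g`, and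
`g` is h-conormal with conormality structure `f`. -/
def IsNormalPairS {G G' : SGrp} (f : G ⟶ G') {X' X : SSet.{0}} (x₀ : X' _⦋0⦌)
    (g : X' ⟶ X) : Prop :=
  ∃ (tq : TwFn (K.Wbar.obj G) G'),
    (∀ (n : ℕ) (x : (K.Wbar.obj G) _⦋n + 1⦌),
      tq.t n x = f.app (op ⦋n⦌) ((K.ν G).t n x)) ∧
    ∃ (tk : TwFn X' (K.Γ.obj X)),
      (∀ (n : ℕ) (x : X' _⦋n + 1⦌),
        tk.t n x = (K.τ X).t n (g.app (op ⦋n + 1⦌) x)) ∧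
      ∃ (Q : PtdTCP (K.Wbar.obj G) (K.wpt G) G' tq)
        (F : PtdTCP X' x₀ (K.Γ.obj X) tk),
        SBundleEquiv (K.sTau f Q) (K.sTheta x₀ g F)

/-- `f` is h-normal if there is a simplicial map `g` between reduced simplicial sets such
that `(f, g)` is a normal pair. -/
def IsHNormalS {G G' : SGrp} (f : G ⟶ G') : Prop :=
  ∃ (X' X : SSet.{0}) (_ : X'.IsReduced) (_ : X.IsReduced) (x₀ : X' _⦋0⦌) (g : X' ⟶ X),
    K.IsNormalPairS f x₀ g

/-- `g` is h-conormal if there is a simplicial group morphism `f` such that `(f, g)` is a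
normal pair. -/
def IsHConormalS {X' X : SSet.{0}} (x₀ : X' _⦋0⦌) (g : X' ⟶ X) : Prop :=
  ∃ (G G' : SGrp) (f : G ⟶ G'), K.IsNormalPairS f x₀ g

end KanData

open KanData

/-- the levelwise product of two simplicial sets -/
def sProd (A B : SSet.{0}) : SSet.{0} where
  obj n := A.obj n × B.obj n
  map f := TypeCat.ofHom (fun p => (A.map f p.1, B.map f p.2))
  map_id n := by
    ext p <;> simp
  map_comp f g := by
    ext p <;> simp


section NatAux

lemma natAux {P Q : SSet.{0}} (f : ∀ n : ℕ, P _⦋n⦌ → Q _⦋n⦌)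
    (hδ : ∀ (n : ℕ) (i : Fin (n + 2)) (p : P _⦋n + 1⦌),
      f n (P.δ i p) = Q.δ i (f (n + 1) p))
    (hσ : ∀ (n : ℕ) (i : Fin (n + 1)) (p : P _⦋n⦌),
      f (n + 1) (P.σ i p) = Q.σ i (f n p)) :
    ∀ (k m n : ℕ), m + n = k → ∀ (θ : (⦋m⦌ : SimplexCategory) ⟶ ⦋n⦌) (p : P _⦋n⦌),
      f m (P.map θ.op p) = Q.map θ.op (f n p) := by
  intro k
  induction k using Nat.strong_induction_on with
  | _ k ih =>
    intro m n hk θ p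
    by_cases hinj : Function.Injective θ.toOrderHom
    · by_cases hsurj : Function.Surjective θ.toOrderHom
      · have hb : Function.Bijective θ.toOrderHom := ⟨hinj, hsurj⟩
        have hc := Fintype.card_of_bijective hb
        simp only [Fintype.card_fin, SimplexCategory.len_mk] at hc
        have hmn : m = n := Nat.succ_injective hc
        subst hmn
        haveI := SimplexCategory.isIso_of_bijective hb
        have hid : θ = 𝟙 _ := SimplexCategory.eq_id_of_isIso θ
        subst hid
        simp
      · match n, hk with
        | 0, hk =>
            have hsub : Subsingleton (Fin (⦋0⦌.len + 1)) := by
              rw [SimplexCategory.len_mk]; exact Fin.subsingleton_one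
            exact absurd (fun y => ⟨0, @Subsingleton.elim _ hsub _ _⟩) hsurj
        | (n' + 1), hk =>
            obtain ⟨i, θ', hθ⟩ := SimplexCategory.eq_comp_δ_of_not_surjective θ hsurj
            subst hθ
            have h1 : P.map (θ' ≫ SimplexCategory.δ i).op p
                = P.map θ'.op (P.δ i p) := by
              rw [op_comp, FunctorToTypes.map_comp_apply]; rfl
            have h2 : Q.map (θ' ≫ SimplexCategory.δ i).op (f (n' + 1) p)
                = Q.map θ'.op (Q.δ i (f (n' + 1) p)) := by
              rw [op_comp, FunctorToTypes.map_comp_apply]; rfl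
            rw [h1, h2, ih (m + n') (by omega) m n' rfl θ' (P.δ i p), hδ n' i p]
    · match m, hk with
      | 0, hk =>
          have hsub : Subsingleton (Fin (⦋0⦌.len + 1)) := by
            rw [SimplexCategory.len_mk]; exact Fin.subsingleton_one
          exact absurd (fun a b _ => @Subsingleton.elim _ hsub a b) hinj
      | (m' + 1), hk =>
          obtain ⟨i, θ', hθ⟩ := SimplexCategory.eq_σ_comp_of_not_injective θ hinj
          subst hθ
          have h1 : P.map (SimplexCategory.σ i ≫ θ').op p
              = P.σ i (P.map θ'.op p) := by
            rw [op_comp, FunctorToTypes.map_comp_apply]; rfl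
          have h2 : Q.map (SimplexCategory.σ i ≫ θ').op (f n p)
              = Q.σ i (Q.map θ'.op (f n p)) := by
            rw [op_comp, FunctorToTypes.map_comp_apply]; rfl
          rw [h1, h2, hσ m' i (P.map θ'.op p), ih (m' + n) (by omega) m' n rfl θ' p]

/-- Build a simplicial map from a levelwise map commuting with faces and degeneracies. -/
def mkSHom {P Q : SSet.{0}} (f : ∀ n : ℕ, P _⦋n⦌ → Q _⦋n⦌)
    (hδ : ∀ (n : ℕ) (i : Fin (n + 2)) (p : P _⦋n + 1⦌),
      f n (P.δ i p) = Q.δ i (f (n + 1) p))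
    (hσ : ∀ (n : ℕ) (i : Fin (n + 1)) (p : P _⦋n⦌),
      f (n + 1) (P.σ i p) = Q.σ i (f n p)) : P ⟶ Q where
  app Δ := TypeCat.ofHom (f Δ.unop.len)
  naturality Δ Δ' θ := by
    ext p
    exact natAux f hδ hσ ((unop Δ').len + (unop Δ).len) (unop Δ').len (unop Δ).len rfl
      θ.unop p

end NatAux


/-- (Part of the proof of Lemma 2.14 of the paper.)  Let `g : X ⟶ Y` be a
simplicial map between reduced simplicial sets, `Γ` the Kan loop group functor, `τ_X` and
`τ_Y` the universal twisting functions, and `ι_g : X ×_{τ_Y g} ΓY ⟶ X` the projection.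
Then the map `(X ×_{τ_Y g} ΓY) ×_{τ_X ι_g} ΓX ⟶ (X ×_{τ_X} ΓX) × ΓY` sending `(x, v, w)`
to `(x, w, Γ(g)(w)⁻¹ ⬝ v)` is an isomorphism of simplicial sets. -/
theorem normal_conormal_stmt19 (K : KanData)
    {X Y : SSet.{0}} (hX : X.IsReduced) (hY : Y.IsReduced) (g : X ⟶ Y)
    -- the twisted cartesian product `B = X ×_{τ_Y g} Γ Y`, with projection `ι_g`
    (tg : TwFn X (K.Γ.obj Y))
    (htg : ∀ (n : ℕ) (x : X _⦋n + 1⦌), tg.t n x = (K.τ Y).t n (g.app (op ⦋n + 1⦌) x))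
    (B : TCP X (K.Γ.obj Y) tg)
    -- the twisted cartesian product `(X ×_{τ_Y g} ΓY) ×_{τ_X ι_g} Γ X`
    (t₂ : TwFn B.P (K.Γ.obj X))
    (ht₂ : ∀ (n : ℕ) (p : B.P _⦋n + 1⦌),
      t₂.t n p = (K.τ X).t n (B.proj.app (op ⦋n + 1⦌) p))
    (T₂ : TCP B.P (K.Γ.obj X) t₂)
    -- the twisted cartesian product `X ×_{τ_X} Γ X`
    (P₁ : TCP X (K.Γ.obj X) (K.τ X)) :
    ∃ m : T₂.P ≅ sProd P₁.P (sU.obj (K.Γ.obj Y)),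
      ∀ (n : ℕ) (p : T₂.P _⦋n⦌),
        m.hom.app (op ⦋n⦌) p =
          ((P₁.e n).symm ((B.e n (T₂.e n p).1).1, (T₂.e n p).2),
            ((K.Γ.map g).app (op ⦋n⦌) (T₂.e n p).2)⁻¹ * (B.e n (T₂.e n p).1).2) := by
    classical
  -- elementwise naturality of `Γg` with respect to faces and degeneracies
  have hφδ : ∀ (n : ℕ) (i : Fin (n + 2)) (w : (K.Γ.obj X).obj (op ⦋n + 1⦌)),
      (K.Γ.map g).app (op ⦋n⦌) (((K.Γ.obj X).δ i) w)
        = ((K.Γ.obj Y).δ i) ((K.Γ.map g).app (op ⦋n + 1⦌) w) := by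
    intro n i w
    have h := (K.Γ.map g).naturality (SimplexCategory.δ i).op
    have h2 := congrArg
      (fun (m : (K.Γ.obj X).obj (op ⦋n + 1⦌) ⟶ (K.Γ.obj Y).obj (op ⦋n⦌)) => m w) h
    simp only [CategoryTheory.comp_apply] at h2
    exact h2
  have hφσ : ∀ (n : ℕ) (i : Fin (n + 1)) (w : (K.Γ.obj X).obj (op ⦋n⦌)),
      (K.Γ.map g).app (op ⦋n + 1⦌) (((K.Γ.obj X).σ i) w)
        = ((K.Γ.obj Y).σ i) ((K.Γ.map g).app (op ⦋n⦌) w) := by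
    intro n i w
    have h := (K.Γ.map g).naturality (SimplexCategory.σ i).op
    have h2 := congrArg
      (fun (m : (K.Γ.obj X).obj (op ⦋n⦌) ⟶ (K.Γ.obj Y).obj (op ⦋n + 1⦌)) => m w) h
    simp only [CategoryTheory.comp_apply] at h2
    exact h2
  -- the levelwise map
  let f : ∀ n : ℕ, T₂.P _⦋n⦌ → (sProd P₁.P (sU.obj (K.Γ.obj Y))) _⦋n⦌ := fun n p =>
    ((P₁.e n).symm ((B.e n (T₂.e n p).1).1, (T₂.e n p).2),
      ((K.Γ.map g).app (op ⦋n⦌) (T₂.e n p).2)⁻¹ * (B.e n (T₂.e n p).1).2)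
  have hfδ : ∀ (n : ℕ) (i : Fin (n + 2)) (p : T₂.P _⦋n + 1⦌),
      f n (T₂.P.δ i p) = (sProd P₁.P (sU.obj (K.Γ.obj Y))).δ i (f (n + 1) p) := by
    intro n i p
    show ((P₁.e n).symm ((B.e n (T₂.e n (T₂.P.δ i p)).1).1, (T₂.e n (T₂.P.δ i p)).2),
        ((K.Γ.map g).app (op ⦋n⦌) (T₂.e n (T₂.P.δ i p)).2)⁻¹
          * (B.e n (T₂.e n (T₂.P.δ i p)).1).2)
      = (P₁.P.δ i ((P₁.e (n + 1)).symm
            ((B.e (n + 1) (T₂.e (n + 1) p).1).1, (T₂.e (n + 1) p).2)),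
          ((K.Γ.obj Y).δ i) (((K.Γ.map g).app (op ⦋n + 1⦌) (T₂.e (n + 1) p).2)⁻¹
            * (B.e (n + 1) (T₂.e (n + 1) p).1).2))
    induction i using Fin.cases with
    | zero =>
      rw [T₂.d₀ n p]
      dsimp only
      rw [B.d₀ n (T₂.e (n + 1) p).1]
      dsimp only
      refine Prod.ext ?_ ?_
      · rw [Equiv.symm_apply_eq, P₁.d₀, Equiv.apply_symm_apply]
        dsimp only
        rw [ht₂, B.proj_eq]
      · dsimp only
        rw [ht₂, B.proj_eq, htg, map_mul, map_mul, map_inv,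
          K.τ_natural g n (B.e (n + 1) (T₂.e (n + 1) p).1).1, hφδ]
        group
    | succ j =>
      rw [T₂.dsucc n j p]
      dsimp only
      rw [B.dsucc n j (T₂.e (n + 1) p).1]
      dsimp only
      refine Prod.ext ?_ ?_
      · rw [Equiv.symm_apply_eq, P₁.dsucc, Equiv.apply_symm_apply]
      · dsimp only
        rw [hφδ, map_mul, map_inv]
  have hfσ : ∀ (n : ℕ) (i : Fin (n + 1)) (p : T₂.P _⦋n⦌),
      f (n + 1) (T₂.P.σ i p) = (sProd P₁.P (sU.obj (K.Γ.obj Y))).σ i (f n p) := by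
    intro n i p
    show ((P₁.e (n + 1)).symm ((B.e (n + 1) (T₂.e (n + 1) (T₂.P.σ i p)).1).1,
          (T₂.e (n + 1) (T₂.P.σ i p)).2),
        ((K.Γ.map g).app (op ⦋n + 1⦌) (T₂.e (n + 1) (T₂.P.σ i p)).2)⁻¹
          * (B.e (n + 1) (T₂.e (n + 1) (T₂.P.σ i p)).1).2)
      = (P₁.P.σ i ((P₁.e n).symm ((B.e n (T₂.e n p).1).1, (T₂.e n p).2)),
          ((K.Γ.obj Y).σ i) (((K.Γ.map g).app (op ⦋n⦌) (T₂.e n p).2)⁻¹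
            * (B.e n (T₂.e n p).1).2))
    rw [T₂.s n i p]
    dsimp only
    rw [B.s n i (T₂.e n p).1]
    dsimp only
    refine Prod.ext ?_ ?_
    · rw [Equiv.symm_apply_eq, P₁.s, Equiv.apply_symm_apply]
    · dsimp only
      rw [hφσ, map_mul, map_inv]
  have hbij : ∀ n : ℕ, Function.Bijective (f n) := by
    intro n
    apply Function.bijective_iff_has_inverse.mpr
    refine ⟨fun z => (T₂.e n).symm ((B.e n).symm ((P₁.e n z.1).1,
        (K.Γ.map g).app (op ⦋n⦌) (P₁.e n z.1).2
        * (show (K.Γ.obj Y).obj (op ⦋n⦌) from z.2)), (P₁.e n z.1).2), ?_, ?_⟩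
    · intro p
      simp only [f, Equiv.apply_symm_apply, mul_inv_cancel_left, Prod.mk.eta,
        Equiv.symm_apply_apply]
    · intro z
      simp only [f, Equiv.apply_symm_apply, inv_mul_cancel_left, Prod.mk.eta,
        Equiv.symm_apply_apply]
      exact Prod.ext rfl (inv_mul_cancel_left (G := (K.Γ.obj Y).obj (op ⦋n⦌)) _ (show (K.Γ.obj Y).obj (op ⦋n⦌) from z.2))
  let η : T₂.P ⟶ sProd P₁.P (sU.obj (K.Γ.obj Y)) := mkSHom f hfδ hfσ
  haveI : ∀ Δ : SimplexCategoryᵒᵖ, IsIso (η.app Δ) := fun Δ =>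
    (CategoryTheory.isIso_iff_bijective _).mpr (hbij (unop Δ).len)
  haveI : IsIso η := NatIso.isIso_of_isIso_app η
  exact ⟨asIso η, fun n p => rfl⟩
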